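/- Let J be a saturated monomial ideal of Borel type in S = k[x_1,...,x_n] (i.e., J : m^∞ = J, where m = (x_1,...,x_n)). Then J : x_n^∞ = J, i.e., J is saturated with respect to x_n alone. -/

import Mathlib

open MvPolynomial Finsupp Module

namespace Paper

variable {k : Type*} [Field k] {n : ℕ}

/-- `J` is a monomial ideal: generated by a set of monomials. -/
def IsMonomialIdeal (J : Ideal (MvPolynomial (Fin n) k)) : Prop :=
  ∃ G : Set (Fin n →₀ ℕ),
    J = Ideal.span ((fun d => (monomial d (1:k) : MvPolynomial (Fin n) k)) '' G)

/-- The Borel-type condition: for `i < j` and a monomial `x^d ∈ J` with `x_j ∣ x^d`,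
some `x_i^s · x^d / x_j` lies in `J`. -/
def BorelCond (J : Ideal (MvPolynomial (Fin n) k)) : Prop :=
  ∀ i j : Fin n, i < j → ∀ d : Fin n →₀ ℕ,
    (monomial d (1:k) : MvPolynomial (Fin n) k) ∈ J → d j ≠ 0 →
    ∃ s : ℕ,
      (monomial (d + Finsupp.single i s - Finsupp.single j 1) (1:k) :
        MvPolynomial (Fin n) k) ∈ J

/-- `J` is a monomial ideal of Borel type. -/
def IsBorelType (J : Ideal (MvPolynomial (Fin n) k)) : Prop :=
  IsMonomialIdeal J ∧ BorelCond J

/-- The saturation `J : I^∞`. -/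
noncomputable def sat (J I : Ideal (MvPolynomial (Fin n) k)) : Ideal (MvPolynomial (Fin n) k) :=
  ⨆ m : ℕ, Submodule.colon J ((I ^ m) : Ideal (MvPolynomial (Fin n) k))

/-- The product of the variables with (0-based) index `≥ r`, i.e. `x_{r+1} ⋯ x_n`. -/
noncomputable def tailProd (k : Type*) [Field k] (n r : ℕ) : MvPolynomial (Fin n) k :=
  ∏ i ∈ Finset.univ.filter (fun i : Fin n => r ≤ (i : ℕ)), X i

/-- `Φ_r(J) = J : (x_{r+1} ⋯ x_n)^∞`. -/
noncomputable def Phi (r : ℕ) (J : Ideal (MvPolynomial (Fin n) k)) :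
    Ideal (MvPolynomial (Fin n) k) :=
  sat J (Ideal.span {tailProd k n r})

/-- The projection `Π_r : k[x_1,…,x_n] → k[x_1,…,x_r]` sending `x_{r+1},…,x_n` to `0`. -/
noncomputable def projDown (k : Type*) [Field k] (n r : ℕ) :
    MvPolynomial (Fin n) k →ₐ[k] MvPolynomial (Fin r) k :=
  aeval (fun i : Fin n => if h : (i : ℕ) < r then X ⟨i, h⟩ else 0)

/-- `Π_r(J)`, the image ideal of `J` in `k[x_1,…,x_r]`. -/
noncomputable def PiIdeal (r : ℕ) (J : Ideal (MvPolynomial (Fin n) k)) :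
    Ideal (MvPolynomial (Fin r) k) :=
  J.map (projDown k n r).toRingHom

/-- The exponent `d` is a minimal generator of the monomial ideal `J`. -/
def IsMinGen (J : Ideal (MvPolynomial (Fin n) k)) (d : Fin n →₀ ℕ) : Prop :=
  (monomial d (1:k) : MvPolynomial (Fin n) k) ∈ J ∧
    ∀ d' : Fin n →₀ ℕ, d' ≤ d →
      (monomial d' (1:k) : MvPolynomial (Fin n) k) ∈ J → d' = d

/-- The leading exponent of a polynomial with respect to a monomial order. -/
noncomputable def leadExp (m : MonomialOrder (Fin n)) (f : MvPolynomial (Fin n) k) :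
    Fin n →₀ ℕ :=
  m.toSyn.symm (f.support.sup fun d => m.toSyn d)

/-- The initial ideal of `P` with respect to the monomial order `m`. -/
noncomputable def initialIdeal (m : MonomialOrder (Fin n)) (P : Ideal (MvPolynomial (Fin n) k)) :
    Ideal (MvPolynomial (Fin n) k) :=
  Ideal.span {g | ∃ f ∈ P, f ≠ 0 ∧ g = (monomial (leadExp m f) (1:k) : MvPolynomial (Fin n) k)}

/-- A homogeneous ideal: closed under taking homogeneous components. -/
def IsHomogIdeal (P : Ideal (MvPolynomial (Fin n) k)) : Prop :=
  ∀ f ∈ P, ∀ i : ℕ, homogeneousComponent i f ∈ P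

/-- The ideal generated by the variables `x_1, …, x_{i+1}` (0-based indices `≤ i`). -/
noncomputable def varIdealLe (k : Type*) [Field k] {n : ℕ} (i : Fin n) :
    Ideal (MvPolynomial (Fin n) k) :=
  Ideal.span ((fun j : Fin n => (X j : MvPolynomial (Fin n) k)) '' {j | j ≤ i})

/-- The Hilbert series of `S/I` as a power series with integer coefficients. -/
noncomputable def hilb {N : ℕ} (I : Ideal (MvPolynomial (Fin N) k)) : PowerSeries ℤ :=
  PowerSeries.mk fun i =>
    (Module.finrank k (Submodule.map (Ideal.Quotient.mkₐ k I).toLinearMap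
      (homogeneousSubmodule (Fin N) k i)) : ℤ)

/-- The `i`-th Hilbert coefficient read off from the numerator polynomial `q`:
the coefficient of `(t-1)^i` in `q`. -/
noncomputable def hc (q : Polynomial ℤ) (i : ℕ) : ℤ :=
  (Polynomial.taylor 1 q).coeff i

/-- The Krull dimension of the quotient ring `S/I`. -/
noncomputable def qdim {N : ℕ} (I : Ideal (MvPolynomial (Fin N) k)) : WithBot (WithTop ℕ) :=
  ringKrullDim (MvPolynomial (Fin N) k ⧸ I)

/-- The embedding `k[x_1,…,x_r] → k[x_1,…,x_n]`. -/
noncomputable def inclUp (k : Type*) [Field k] {r n : ℕ} (h : r ≤ n) :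
    MvPolynomial (Fin r) k →ₐ[k] MvPolynomial (Fin n) k :=
  rename (Fin.castLE h)

/-- The embedding of variables for the tail subring `k[x_{r+1},…,x_n]`. -/
def tailEmb (n r : ℕ) (h : r ≤ n) : Fin (n - r) → Fin n :=
  fun j => ⟨r + j.1, by omega⟩

/-- The inclusion `k[x_{r+1},…,x_n] → k[x_1,…,x_n]` as a ring hom. -/
noncomputable def tailIncl (k : Type*) [Field k] {n : ℕ} (r : ℕ) (h : r ≤ n) :
    MvPolynomial (Fin (n - r)) k →+* MvPolynomial (Fin n) k :=
  (rename (tailEmb n r h)).toRingHom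

/-- `J₁ = (J ∩ k[x_1,…,x_r])S`: the ideal generated by the monomials of `J`
lying in `k[x_1,…,x_r]`. -/
noncomputable def Jone (r : ℕ) (J : Ideal (MvPolynomial (Fin n) k)) :
    Ideal (MvPolynomial (Fin n) k) :=
  Ideal.span {g | ∃ d : Fin n →₀ ℕ, (∀ i : Fin n, r ≤ (i : ℕ) → d i = 0) ∧
    (monomial d (1:k) : MvPolynomial (Fin n) k) ∈ J ∧
    g = (monomial d (1:k) : MvPolynomial (Fin n) k)}

/-- The quotient module `J₂/J₁` for ideals `J₁ ≤ J₂`. -/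
abbrev quotMod (J₁ J₂ : Ideal (MvPolynomial (Fin n) k)) :=
  (J₂ : Submodule (MvPolynomial (Fin n) k) (MvPolynomial (Fin n) k)) ⧸
    (Submodule.comap
      (J₂ : Submodule (MvPolynomial (Fin n) k) (MvPolynomial (Fin n) k)).subtype
      (J₁ : Submodule (MvPolynomial (Fin n) k) (MvPolynomial (Fin n) k)))

/-- `J₂/J₁` as a module over `k[x_{r+1},…,x_n]`. -/
noncomputable def quotModTail (r : ℕ) (h : r ≤ n) (J₁ J₂ : Ideal (MvPolynomial (Fin n) k)) :
    Module (MvPolynomial (Fin (n - r)) k) (quotMod J₁ J₂) :=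
  Module.compHom _ (tailIncl k r h)

/-- The degrevlex property of a monomial order: compare total degrees first, and break
ties by the *last* variable in which the exponents differ, where *larger* exponent
means *smaller* monomial. -/
def IsDegRevLex (m : MonomialOrder (Fin n)) : Prop :=
  ∀ a b : Fin n →₀ ℕ, (m.toSyn a < m.toSyn b) ↔
    ((a.sum fun _ e => e) < (b.sum fun _ e => e) ∨
      ((a.sum fun _ e => e) = (b.sum fun _ e => e) ∧
        ∃ i : Fin n, b i < a i ∧ ∀ j : Fin n, i < j → a j = b j))

end Paper

open Paper MvPolynomial


section Stmt5Aux

variable {k : Type*} [Field k] {n : ℕ}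

/-- total degree of an exponent vector -/
private def degw (w : Fin n →₀ ℕ) : ℕ := w.sum fun _ e => e

private lemma degw_eq_sum (w : Fin n →₀ ℕ) : degw w = ∑ i, w i :=
  Finsupp.sum_fintype _ _ fun _ => rfl

private lemma degw_add (a b : Fin n →₀ ℕ) : degw (a + b) = degw a + degw b := by
  simp [degw_eq_sum, Finset.sum_add_distrib]

private lemma degw_mono {a b : Fin n →₀ ℕ} (h : a ≤ b) : degw a ≤ degw b := by
  rw [degw_eq_sum, degw_eq_sum]
  exact Finset.sum_le_sum fun i _ => h i

private lemma degw_single (i : Fin n) (m : ℕ) : degw (Finsupp.single i m) = m := by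
  simp [degw, Finsupp.sum_single_index]

private lemma mem_sat_iff {J I : Ideal (MvPolynomial (Fin n) k)} {f : MvPolynomial (Fin n) k} :
    f ∈ sat J I ↔ ∃ m : ℕ, f ∈ Submodule.colon J ((I ^ m : Ideal (MvPolynomial (Fin n) k)) :
      Submodule (MvPolynomial (Fin n) k) (MvPolynomial (Fin n) k)) := by
  unfold Paper.sat
  exact Submodule.mem_iSup_of_directed _
    (Monotone.directed_le fun a b hab =>
      Submodule.colon_mono le_rfl (Ideal.pow_le_pow_right hab))

/-- the power of the maximal ideal is contained in the span of monomials of degree ≥ N -/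
private lemma pow_le_spanW (N : ℕ) :
    ((Ideal.span (Set.range (X : Fin n → MvPolynomial (Fin n) k))) ^ N :
        Ideal (MvPolynomial (Fin n) k)) ≤
      Ideal.span ((fun d => (monomial d (1:k) : MvPolynomial (Fin n) k)) ''
        {w : Fin n →₀ ℕ | N ≤ degw w}) := by
  induction N with
  | zero =>
    have h1 : (1 : MvPolynomial (Fin n) k) ∈
        Ideal.span ((fun d => (monomial d (1:k) : MvPolynomial (Fin n) k)) ''
          {w : Fin n →₀ ℕ | 0 ≤ degw w}) := by
      apply Ideal.subset_span
      exact ⟨0, by simp, by simp⟩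
    rw [pow_zero, Ideal.one_eq_top, (Ideal.eq_top_iff_one _).mpr h1]
  | succ N ih =>
    have hX : (Set.range (X : Fin n → MvPolynomial (Fin n) k)) =
        (fun d => (monomial d (1:k) : MvPolynomial (Fin n) k)) ''
          (Set.range fun i : Fin n => Finsupp.single i 1) := by
      ext p
      constructor
      · rintro ⟨i, rfl⟩
        refine ⟨Finsupp.single i 1, ⟨i, rfl⟩, ?_⟩
        show (monomial (Finsupp.single i 1) (1:k) : MvPolynomial (Fin n) k) = X i
        rw [← X_pow_eq_monomial, pow_one]
      · rintro ⟨_, ⟨i, rfl⟩, rfl⟩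
        refine ⟨i, ?_⟩
        show (X i : MvPolynomial (Fin n) k) = monomial (Finsupp.single i 1) (1:k)
        rw [← X_pow_eq_monomial, pow_one]
    rw [pow_succ]
    calc (Ideal.span (Set.range (X : Fin n → MvPolynomial (Fin n) k))) ^ N *
          Ideal.span (Set.range (X : Fin n → MvPolynomial (Fin n) k))
        ≤ Ideal.span ((fun d => (monomial d (1:k) : MvPolynomial (Fin n) k)) ''
            {w : Fin n →₀ ℕ | N ≤ degw w}) *
          Ideal.span (Set.range (X : Fin n → MvPolynomial (Fin n) k)) :=
          Ideal.mul_mono_left ih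
      _ ≤ Ideal.span ((fun d => (monomial d (1:k) : MvPolynomial (Fin n) k)) ''
            {w : Fin n →₀ ℕ | N + 1 ≤ degw w}) := by
          rw [hX, Ideal.span_mul_span']
          apply Ideal.span_mono
          rintro p hp
          rw [Set.mem_mul] at hp
          obtain ⟨a, ⟨w, hw, rfl⟩, b, ⟨_, ⟨i, rfl⟩, rfl⟩, rfl⟩ := hp
          refine ⟨w + Finsupp.single i 1, ?_, by rw [monomial_mul, mul_one]⟩
          have : degw (w + Finsupp.single i 1) = degw w + 1 := by
            rw [degw_add, degw_single]
          simp only [Set.mem_setOf_eq] at hw ⊢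
          omega

private lemma descend {J : Ideal (MvPolynomial (Fin n) k)} {G : Set (Fin n →₀ ℕ)}
    (hn : 0 < n)
    (hG : J = Ideal.span ((fun d => (monomial d (1:k) : MvPolynomial (Fin n) k)) '' G))
    (hB : BorelCond J)
    (hsat : sat J (Ideal.span (Set.range (X : Fin n → MvPolynomial (Fin n) k))) = J)
    (m : ℕ) :
    ∀ d : Fin n →₀ ℕ,
      (monomial (d + Finsupp.single (⟨n - 1, Nat.sub_lt hn Nat.one_pos⟩ : Fin n) m) (1:k) :
        MvPolynomial (Fin n) k) ∈ J →
      (monomial d (1:k) : MvPolynomial (Fin n) k) ∈ J := by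
  classical
  set last : Fin n := ⟨n - 1, by omega⟩ with hlast
  have memJ : ∀ f : MvPolynomial (Fin n) k,
      f ∈ J ↔ ∀ e ∈ f.support, ∃ g ∈ G, g ≤ e := by
    intro f
    rw [hG]
    exact mem_ideal_span_monomial_image
  have memJmono : ∀ e : Fin n →₀ ℕ,
      (monomial e (1:k) : MvPolynomial (Fin n) k) ∈ J ↔ ∃ g ∈ G, g ≤ e := by
    intro e
    rw [memJ]
    constructor
    · intro h
      exact h e (by simp [support_monomial])
    · intro h e' he'
      rw [support_monomial] at he'
      simp only [if_neg (one_ne_zero (α := k)), Finset.mem_singleton] at he'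
      exact he' ▸ h
  have hlastmax : ∀ i : Fin n, i ≤ last := by
    intro i
    rw [Fin.le_def]
    have := i.2
    simp only [hlast]
    omega
  induction m with
  | zero => intro d h; simpa using h
  | succ m ih =>
    intro d h
    apply ih
    set u : Fin n →₀ ℕ := d + Finsupp.single last m with hu_def
    -- the key monomial membership with one extra x_last
    have hu : (monomial (u + Finsupp.single last 1) (1:k) : MvPolynomial (Fin n) k) ∈ J := by
      have : u + Finsupp.single last 1 = d + Finsupp.single last (m + 1) := by
        rw [hu_def, add_assoc, ← Finsupp.single_add]
      rwa [this]
    -- Borel step for each i ≠ last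
    have hBi : ∀ i : Fin n, ∃ s : ℕ,
        (monomial (u + Finsupp.single i s) (1:k) : MvPolynomial (Fin n) k) ∈ J := by
      intro i
      by_cases hi : i = last
      · exact ⟨1, hi ▸ hu⟩
      · have hilt : i < last := lt_of_le_of_ne (hlastmax i) hi
        have hdvd : (d + Finsupp.single last (m + 1)) last ≠ 0 := by
          simp [Finsupp.add_apply, Finsupp.single_apply]
        obtain ⟨s, hs⟩ := hB i last hilt (d + Finsupp.single last (m + 1)) h hdvd
        refine ⟨s, ?_⟩
        have heq : d + Finsupp.single last (m + 1) + Finsupp.single i s -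
            Finsupp.single last 1 = u + Finsupp.single i s := by
          ext j
          simp only [Finsupp.tsub_apply, Finsupp.add_apply, Finsupp.single_apply, hu_def]
          by_cases hjl : last = j
          · have hij : i ≠ j := fun hh => hi (hh.trans hjl.symm)
            simp only [if_pos hjl, if_neg hij]
            omega
          · simp only [if_neg hjl]
            omega
        rwa [heq] at hs
    choose s hs using hBi
    set N : ℕ := 1 + ∑ i, s i with hN
    -- claim: u + w ∈ J for any w of degree ≥ N
    have claim : ∀ w : Fin n →₀ ℕ, N ≤ degw w →
        (monomial (u + w) (1:k) : MvPolynomial (Fin n) k) ∈ J := by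
      intro w hw
      by_cases hwl : w last = 0
      · -- pigeonhole: some i ≠ last with s i ≤ w i
        have hex : ∃ i : Fin n, i ≠ last ∧ s i ≤ w i := by
          by_contra hcon
          push_neg at hcon
          have hle : ∀ i ∈ Finset.univ.erase last, w i ≤ s i := by
            intro i hi
            have := hcon i (Finset.mem_erase.mp hi).1
            omega
          have h1 : ∑ i ∈ Finset.univ.erase last, w i ≤ ∑ i ∈ Finset.univ.erase last, s i :=
            Finset.sum_le_sum hle
          have h2 : ∑ i ∈ Finset.univ.erase last, s i ≤ ∑ i, s i :=
            Finset.sum_le_sum_of_subset (Finset.erase_subset _ _)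
          have h3 : ∑ i, w i = ∑ i ∈ Finset.univ.erase last, w i := by
            rw [← Finset.add_sum_erase _ _ (Finset.mem_univ last), hwl, zero_add]
          rw [degw_eq_sum] at hw
          omega
        obtain ⟨i, hi, hsi⟩ := hex
        obtain ⟨g, hgG, hg⟩ := (memJmono _).mp (hs i)
        exact (memJmono _).mpr ⟨g, hgG, le_trans hg (add_le_add (le_refl u)
          (Finsupp.single_le_iff.mpr hsi))⟩
      · obtain ⟨g, hgG, hg⟩ := (memJmono _).mp hu
        exact (memJmono _).mpr ⟨g, hgG, le_trans hg (add_le_add (le_refl u)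
          (Finsupp.single_le_iff.mpr (by omega)))⟩
    -- hence the monomial u is in J : m^N ≤ sat J m = J
    have hcolon : (monomial u (1:k) : MvPolynomial (Fin n) k) ∈
        Submodule.colon (J : Submodule (MvPolynomial (Fin n) k) (MvPolynomial (Fin n) k))
          (((Ideal.span (Set.range (X : Fin n → MvPolynomial (Fin n) k))) ^ N :
            Ideal (MvPolynomial (Fin n) k)) :
            Submodule (MvPolynomial (Fin n) k) (MvPolynomial (Fin n) k)) := by
      rw [Submodule.mem_colon]
      intro p hp
      have hp' := pow_le_spanW (k := k) N hp
      rw [mem_ideal_span_monomial_image] at hp'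
      rw [smul_eq_mul, memJ]
      intro e he
      have hsub := support_mul (monomial u (1:k)) p he
      rw [Finset.mem_add] at hsub
      obtain ⟨a, ha, w, hw, rfl⟩ := hsub
      rw [support_monomial, if_neg (one_ne_zero (α := k)), Finset.mem_singleton] at ha
      subst ha
      obtain ⟨w', hw', hle⟩ := hp' w hw
      have hdeg : N ≤ degw w := le_trans hw' (degw_mono hle)
      exact (memJmono _).mp (claim w hdeg)
    have hsatmem : (monomial u (1:k) : MvPolynomial (Fin n) k) ∈
        sat J (Ideal.span (Set.range (X : Fin n → MvPolynomial (Fin n) k))) :=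
      mem_sat_iff.mpr ⟨N, hcolon⟩
    rwa [hsat] at hsatmem

end Stmt5Aux

/-- A saturated monomial ideal of Borel type is saturated with
respect to the last variable `x_n` alone: `J : x_n^∞ = J`. -/
theorem stmt5 {k : Type*} [Field k] {n : ℕ} (hn : 0 < n)
    (J : Ideal (MvPolynomial (Fin n) k)) (hJ : IsBorelType J)
    (hsat : sat J (Ideal.span (Set.range (X : Fin n → MvPolynomial (Fin n) k))) = J) :
    sat J (Ideal.span {(X (⟨n - 1, by omega⟩ : Fin n) : MvPolynomial (Fin n) k)}) = J := by
  classical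
  obtain ⟨⟨G, hG⟩, hB⟩ := hJ
  set last : Fin n := ⟨n - 1, by omega⟩ with hlast
  have memJ : ∀ f : MvPolynomial (Fin n) k,
      f ∈ J ↔ ∀ e ∈ f.support, ∃ g ∈ G, g ≤ e := by
    intro f
    rw [hG]
    exact mem_ideal_span_monomial_image
  have memJmono : ∀ e : Fin n →₀ ℕ,
      (monomial e (1:k) : MvPolynomial (Fin n) k) ∈ J ↔ ∃ g ∈ G, g ≤ e := by
    intro e
    rw [memJ]
    constructor
    · intro h
      exact h e (by simp [support_monomial])
    · intro h e' he'
      rw [support_monomial] at he'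
      simp only [if_neg (one_ne_zero (α := k)), Finset.mem_singleton] at he'
      exact he' ▸ h
  apply le_antisymm
  · intro f hf
    obtain ⟨N, hN⟩ := mem_sat_iff.mp hf
    have hxN : (X last : MvPolynomial (Fin n) k) ^ N ∈
        ((Ideal.span {(X last : MvPolynomial (Fin n) k)}) ^ N : Ideal (MvPolynomial (Fin n) k)) :=
      Ideal.pow_mem_pow (Ideal.mem_span_singleton_self _) N
    have hfx : f * (X last : MvPolynomial (Fin n) k) ^ N ∈ J := by
      have := Submodule.mem_colon.mp hN _ hxN
      rwa [smul_eq_mul] at this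
    rw [X_pow_eq_monomial] at hfx
    rw [memJ]
    intro e he
    have hco : coeff (e + Finsupp.single last N)
        (f * monomial (Finsupp.single last N) (1:k)) = coeff e f := by
      rw [coeff_mul_monomial, mul_one]
    have hmem : e + Finsupp.single last N ∈
        (f * monomial (Finsupp.single last N) (1:k)).support := by
      rw [MvPolynomial.mem_support_iff, hco]
      exact MvPolynomial.mem_support_iff.mp he
    obtain ⟨g, hgG, hg⟩ := (memJ _).mp hfx _ hmem
    have hmono : (monomial (e + Finsupp.single last N) (1:k) : MvPolynomial (Fin n) k) ∈ J :=
      (memJmono _).mpr ⟨g, hgG, hg⟩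
    exact (memJmono _).mp (descend hn hG hB hsat N e hmono)
  · intro f hf
    refine mem_sat_iff.mpr ⟨0, ?_⟩
    rw [pow_zero, Ideal.one_eq_top, Submodule.mem_colon]
    intro p _
    rw [smul_eq_mul]
    exact J.mul_mem_right p hf
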